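/- Let n, l be positive natural numbers, A an n×n real matrix, B an n×1 real matrix, K a 1×n real matrix, D an n×l real matrix, P a symmetric positive definite n×n real matrix, τ > 0, χ > 0, and ρ₀ ≤ ρ₁ real numbers. Suppose that for every diagonal matrix Ψ with each diagonal entry in {ρ₀, ρ₁} the block matrix [[(A+BKΨ)ᵀP + P(A+BKΨ) + τP, PD], [DᵀP, −χI_l]] is negative definite. Let x : ℝ → ℝⁿ be differentiable, f : ℝ → ℝˡ, and Ψ : ℝ → (n×n diagonal matrices) be such that every diagonal entry of Ψ(t) lies in [ρ₀, ρ₁] and x′(t) = (A + BKΨ(t))x(t) + D f(t) for all t ≥ 0. Then the function V(t) = x(t)ᵀ P x(t) satisfies V′(t) ≤ −τ V(t) + χ |f(t)|² for all t ≥ 0. -/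

import Mathlib

open Matrix

/-- A real matrix is negative definite (as a quadratic form) if `zᵀ M z < 0`
for every nonzero vector `z`. -/
def NegDefQF {m : Type*} [Fintype m] (M : Matrix m m ℝ) : Prop :=
  ∀ z : m → ℝ, z ≠ 0 → z ⬝ᵥ M *ᵥ z < 0

lemma quad_hasDeriv {n : ℕ} (P : Matrix (Fin n) (Fin n) ℝ) (x : ℝ → Fin n → ℝ)
    (v : Fin n → ℝ) (t : ℝ) (hx : HasDerivAt x v t) :
    HasDerivAt (fun s => x s ⬝ᵥ P *ᵥ x s) (v ⬝ᵥ P *ᵥ x t + x t ⬝ᵥ P *ᵥ v) t := by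
  have hc : ∀ i, HasDerivAt (fun s => x s i) (v i) t := hasDerivAt_pi.mp hx
  have h : HasDerivAt (fun s => ∑ i, ∑ j, x s i * (P i j * x s j))
      (∑ i, ∑ j, (v i * (P i j * x t j) + x t i * (P i j * v j))) t := by
    apply HasDerivAt.fun_sum; intro i _; apply HasDerivAt.fun_sum; intro j _
    exact (hc i).mul ((hc j).const_mul _)
  convert h using 1
  · ext s; simp [dotProduct, mulVec, Finset.mul_sum]
  · simp [dotProduct, mulVec, Finset.mul_sum, Finset.sum_add_distrib]

lemma quad_expand {n l : ℕ} (M P : Matrix (Fin n) (Fin n) ℝ)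
    (D : Matrix (Fin n) (Fin l) ℝ) (τ χ : ℝ) (u : Fin n → ℝ) (g : Fin l → ℝ) :
    Sum.elim u g ⬝ᵥ (Matrix.fromBlocks (Mᵀ * P + P * M + τ • P) (P * D) (Dᵀ * P)
        ((-χ) • (1 : Matrix (Fin l) (Fin l) ℝ))) *ᵥ Sum.elim u g
      = (M *ᵥ u + D *ᵥ g) ⬝ᵥ P *ᵥ u + u ⬝ᵥ P *ᵥ (M *ᵥ u + D *ᵥ g)
        + τ * (u ⬝ᵥ P *ᵥ u) - χ * ∑ i, g i ^ 2 := by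
  have hgg : g ⬝ᵥ g = ∑ i, g i ^ 2 := by simp [dotProduct, pow_two]
  simp only [Matrix.fromBlocks_mulVec, sumElim_dotProduct_sumElim,
    Matrix.add_mulVec, Matrix.mulVec_add, dotProduct_add, add_dotProduct,
    Matrix.dotProduct_mulVec, ← Matrix.vecMul_vecMul, Matrix.vecMul_transpose,
    Matrix.add_vecMul, Sum.elim_comp_inl, Sum.elim_comp_inr,
    Matrix.smul_mulVec, dotProduct_smul, smul_eq_mul,
    Matrix.vecMul_smul, Matrix.one_mulVec, Matrix.vecMul_one, smul_dotProduct]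
  rw [← hgg]
  ring

lemma quad_affine {n : ℕ} (P : Matrix (Fin n) (Fin n) ℝ) (hP : Pᵀ = P)
    (B : Matrix (Fin n) (Fin 1) ℝ) (K : Matrix (Fin 1) (Fin n) ℝ)
    (u : Fin n → ℝ) (e : Fin n → ℝ) :
    ((B * K * Matrix.diagonal e) *ᵥ u) ⬝ᵥ P *ᵥ u
      + u ⬝ᵥ P *ᵥ ((B * K * Matrix.diagonal e) *ᵥ u)
      = 2 * ∑ i, ((P *ᵥ u) ᵥ* (B * K)) i * (e i * u i) := by
  have h1 : u ᵥ* P = P *ᵥ u := by rw [← hP, Matrix.vecMul_transpose, hP]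
  have h2 : u ⬝ᵥ P *ᵥ ((B * K * Matrix.diagonal e) *ᵥ u)
      = (P *ᵥ u) ⬝ᵥ ((B * K * Matrix.diagonal e) *ᵥ u) := by
    rw [Matrix.dotProduct_mulVec, h1]
  rw [h2, dotProduct_comm, ← two_mul]
  congr 1
  rw [← Matrix.mulVec_mulVec, Matrix.dotProduct_mulVec]
  simp [dotProduct, Matrix.mulVec_diagonal]

/-- along solutions of `x' = (A + BKΨ(t))x + Df`, with the LMI
satisfied at the vertices of the box `[ρ₀, ρ₁]ⁿ`, the Lyapunov function
`V = xᵀPx` satisfies `V' ≤ −τV + χ|f|²`. -/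
theorem stmt_3 (n l : ℕ) (hn : 0 < n) (hl : 0 < l)
    (A : Matrix (Fin n) (Fin n) ℝ) (B : Matrix (Fin n) (Fin 1) ℝ)
    (K : Matrix (Fin 1) (Fin n) ℝ) (D : Matrix (Fin n) (Fin l) ℝ)
    (P : Matrix (Fin n) (Fin n) ℝ) (hPsymm : P.IsSymm)
    (hPpos : ∀ z : Fin n → ℝ, z ≠ 0 → 0 < z ⬝ᵥ P *ᵥ z)
    (τ χ : ℝ) (hτ : 0 < τ) (hχ : 0 < χ) (ρ₀ ρ₁ : ℝ) (hρ : ρ₀ ≤ ρ₁)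
    (hvertex : ∀ d : Fin n → ℝ, (∀ i, d i = ρ₀ ∨ d i = ρ₁) →
      NegDefQF (Matrix.fromBlocks
        ((A + B * K * Matrix.diagonal d)ᵀ * P + P * (A + B * K * Matrix.diagonal d) + τ • P)
        (P * D) (Dᵀ * P) ((-χ) • (1 : Matrix (Fin l) (Fin l) ℝ))))
    (x : ℝ → Fin n → ℝ) (f : ℝ → Fin l → ℝ) (ψ : ℝ → Fin n → ℝ)
    (hψ : ∀ t ≥ (0 : ℝ), ∀ i, ψ t i ∈ Set.Icc ρ₀ ρ₁)
    (hx : ∀ t ≥ (0 : ℝ), HasDerivAt x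
      ((A + B * K * Matrix.diagonal (ψ t)) *ᵥ x t + D *ᵥ f t) t) :
    ∀ t ≥ (0 : ℝ),
      deriv (fun s => x s ⬝ᵥ P *ᵥ x s) t
        ≤ -τ * (x t ⬝ᵥ P *ᵥ x t) + χ * (∑ i, (f t i) ^ 2) := by
  intro t ht
  set u := x t with hu
  set g := f t with hg
  set v := (A + B * K * Matrix.diagonal (ψ t)) *ᵥ u + D *ᵥ g with hv
  rw [(quad_hasDeriv P x v t (hx t ht)).deriv]
  -- the quadratic form evaluated at parameter e
  set F : (Fin n → ℝ) → ℝ := fun e =>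
    Sum.elim u g ⬝ᵥ (Matrix.fromBlocks
      ((A + B * K * Matrix.diagonal e)ᵀ * P + P * (A + B * K * Matrix.diagonal e) + τ • P)
      (P * D) (Dᵀ * P) ((-χ) • (1 : Matrix (Fin l) (Fin l) ℝ))) *ᵥ Sum.elim u g with hF
  set c : Fin n → ℝ := (P *ᵥ u) ᵥ* (B * K) with hc
  have hFeq : ∀ e : Fin n → ℝ, F e
      = (A *ᵥ u + D *ᵥ g) ⬝ᵥ P *ᵥ u + u ⬝ᵥ P *ᵥ (A *ᵥ u + D *ᵥ g)
        + τ * (u ⬝ᵥ P *ᵥ u) - χ * ∑ i, g i ^ 2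
        + 2 * ∑ i, c i * (e i * u i) := by
    intro e
    simp only [hF]
    rw [quad_expand (A + B * K * Matrix.diagonal e) P D τ χ u g]
    have := quad_affine P hPsymm B K u e
    simp only [Matrix.add_mulVec, dotProduct_add, add_dotProduct,
      Matrix.mulVec_add, Matrix.mulVec_add] at *
    linarith [this]
  -- the vertex maximizing the affine part
  set e : Fin n → ℝ := fun i => if 0 ≤ c i * u i then ρ₁ else ρ₀ with he
  have hev : ∀ i, e i = ρ₀ ∨ e i = ρ₁ := by
    intro i; by_cases h : 0 ≤ c i * u i <;> simp [he, h]
  have hle : F (ψ t) ≤ F e := by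
    rw [hFeq, hFeq]
    have : ∑ i, c i * (ψ t i * u i) ≤ ∑ i, c i * (e i * u i) := by
      apply Finset.sum_le_sum
      intro i _
      obtain ⟨h0, h1⟩ := hψ t ht i
      by_cases h : 0 ≤ c i * u i
      · simp only [he, if_pos h]; nlinarith
      · simp only [he, if_neg h]; nlinarith [not_le.mp h]
    linarith
  have hFe : F e ≤ 0 := by
    by_cases hz : Sum.elim u g = 0
    · rw [hF]; simp [hz]
    · exact (hvertex e hev (Sum.elim u g) hz).le
  have hFd : F (ψ t) ≤ 0 := hle.trans hFe
  have hexp : F (ψ t) = v ⬝ᵥ P *ᵥ u + u ⬝ᵥ P *ᵥ v + τ * (u ⬝ᵥ P *ᵥ u)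
      - χ * ∑ i, g i ^ 2 := by
    simp only [hF]
    rw [quad_expand]
  rw [hexp] at hFd
  linarith
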